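/- If a convex set 𝐌 of Hermitian operators contains 0 and I, contains I − M whenever it contains M, and spans the space of Hermitian operators over the reals, then there exists r > 0 such that (1/2)·I + H ∈ 𝐌 for every Hermitian H with operator norm ‖H‖_∞ ≤ r. -/

import Mathlib

open Matrix
open scoped ComplexOrder

namespace QSVQDH

variable {d : ℕ}

/-- Schatten 1-norm (trace norm). -/
noncomputable def trNorm (A : Matrix (Fin d) (Fin d) ℂ) : ℝ :=
  (let hA := Matrix.posSemidef_conjTranspose_mul_self A;
    (hA.1.eigenvectorUnitary.1 * diagonal (fun i => ((Real.sqrt (hA.1.eigenvalues i) : ℝ) : ℂ)) *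
      (star hA.1.eigenvectorUnitary : Matrix (Fin d) (Fin d) ℂ))).trace.re

/-- Schatten 2-norm (Hilbert–Schmidt norm). -/
noncomputable def hsNorm (A : Matrix (Fin d) (Fin d) ℂ) : ℝ :=
  Real.sqrt ((Aᴴ * A).trace.re)

/-- Operator norm. -/
noncomputable def opNorm (A : Matrix (Fin d) (Fin d) ℂ) : ℝ :=
  ‖Matrix.toEuclideanCLM (𝕜 := ℂ) A‖

/-- Density operator: positive semidefinite with unit trace. -/
def IsDensity (ρ : Matrix (Fin d) (Fin d) ℂ) : Prop := ρ.PosSemidef ∧ ρ.trace = 1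

/-- POVM element: 0 ≤ M ≤ I. -/
def IsPOVMElem (M : Matrix (Fin d) (Fin d) ℂ) : Prop := M.PosSemidef ∧ (1 - M).PosSemidef

/-- A measurement class of binary effects: contains 0, consists of POVM elements,
is convex, and is closed under M ↦ I − M. -/
def IsMClass (Mset : Set (Matrix (Fin d) (Fin d) ℂ)) : Prop :=
  0 ∈ Mset ∧ (∀ M ∈ Mset, IsPOVMElem M) ∧ Convex ℝ Mset ∧ (∀ M ∈ Mset, 1 - M ∈ Mset)

/-- The M-seminorm ‖Δ‖_M = sup_{M ∈ Mset} (2 tr(MΔ) − tr Δ). -/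
noncomputable def Mnorm (Mset : Set (Matrix (Fin d) (Fin d) ℂ))
    (Δ : Matrix (Fin d) (Fin d) ℂ) : ℝ :=
  sSup ((fun M => 2 * (M * Δ).trace.re - Δ.trace.re) '' Mset)

/-- The ε-distinguishability ratio μ_{ρ,M}(ε). -/
noncomputable def mu (Mset : Set (Matrix (Fin d) (Fin d) ℂ))
    (ρ : Matrix (Fin d) (Fin d) ℂ) (ε : ℝ) : ℝ :=
  (1 / (2 * ε)) *
    sInf ((fun σ => Mnorm Mset (ρ - σ)) '' {σ | IsDensity σ ∧ 2 * ε ≤ trNorm (ρ - σ)})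

/-- The ε-visibility γ_{V,M}(ε), where the subspace V is given by its
orthogonal projector P. -/
noncomputable def gamma (Mset : Set (Matrix (Fin d) (Fin d) ℂ))
    (P : Matrix (Fin d) (Fin d) ℂ) (ε : ℝ) : ℝ :=
  (1 / ε) * sSup ((fun Ω =>
      sInf ((fun p : Matrix (Fin d) (Fin d) ℂ × Matrix (Fin d) (Fin d) ℂ =>
          (Ω * (p.1 - p.2)).trace.re) ''
        {p | IsDensity p.1 ∧ P * p.1 = p.1 ∧ IsDensity p.2 ∧ (p.2 * P).trace.re ≤ 1 - ε}))
    '' Mset)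

/-- The ε-visibility in its minimax (minimum) form. -/
noncomputable def gammaMin (Mset : Set (Matrix (Fin d) (Fin d) ℂ))
    (P : Matrix (Fin d) (Fin d) ℂ) (ε : ℝ) : ℝ :=
  sInf ((fun p : Matrix (Fin d) (Fin d) ℂ × Matrix (Fin d) (Fin d) ℂ =>
      (1 / (2 * ε)) * Mnorm Mset (p.1 - p.2)) ''
    {p | IsDensity p.1 ∧ P * p.1 = p.1 ∧ IsDensity p.2 ∧ (p.2 * P).trace.re ≤ 1 - ε})

/-- μ_{ρ,M}(1), defined through perfectly distinguishable (orthogonal) counterparts. -/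
noncomputable def muone (Mset : Set (Matrix (Fin d) (Fin d) ℂ))
    (ρ : Matrix (Fin d) (Fin d) ℂ) : ℝ :=
  (1 / 2) * sInf ((fun σ => Mnorm Mset (ρ - σ)) '' {σ | IsDensity σ ∧ (ρ * σ).trace = 0})

/-- The distinguishability ratio μ̂_{ρ,M}. -/
noncomputable def muhat (Mset : Set (Matrix (Fin d) (Fin d) ℂ))
    (ρ : Matrix (Fin d) (Fin d) ℂ) : ℝ :=
  sInf ((fun σ => Mnorm Mset (ρ - σ) / trNorm (ρ - σ)) '' {σ | IsDensity σ ∧ σ ≠ ρ})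


/-- Auxiliary: a convex, symmetric set containing 0 contains all combinations
with absolute coefficient sum at most 1. -/
lemma comb_mem {X : Type*} [AddCommGroup X] [Module ℝ X] {s : Set X}
    (hconv : Convex ℝ s) (h0 : 0 ∈ s) (hsymm : ∀ x ∈ s, -x ∈ s)
    {ι : Type*} [Fintype ι] (c : ι → ℝ) (f : ι → X)
    (hf : ∀ i, f i ∈ s) (hc : ∑ i, |c i| ≤ 1) :
    (∑ i, c i • f i) ∈ s := by
  classical
  set g : ι → X := fun i => if 0 ≤ c i then f i else -f i with hg
  have hgs : ∀ i, g i ∈ s := fun i => by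
    by_cases h : 0 ≤ c i <;> simp [hg, h, hf i, hsymm _ (hf i)]
  have hmem := hconv.sum_mem (t := (Finset.univ : Finset (Option ι)))
      (w := fun o : Option ι => o.elim (1 - ∑ i, |c i|) (fun i => |c i|))
      (z := fun o : Option ι => o.elim (0 : X) g)
      (fun o _ => by cases o with
        | none => simpa using hc
        | some i => exact abs_nonneg _)
      (by rw [Fintype.sum_option]; simp)
      (fun o _ => by cases o with
        | none => exact h0
        | some i => exact hgs i)
  rw [Fintype.sum_option] at hmem
  have key : ∑ i, c i • f i = ∑ i, |c i| • g i := by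
    refine Finset.sum_congr rfl fun i _ => ?_
    by_cases h : 0 ≤ c i
    · simp [hg, h, abs_of_nonneg h]
    · push_neg at h
      simp [hg, not_le.mpr h, abs_of_neg h, smul_neg, neg_smul]
  simpa [key] using hmem

/-- Lemma 2: an informationally complete measurement class contains a
ball around (1/2)·I. -/
theorem ball_around_half_identity (Mset : Set (Matrix (Fin d) (Fin d) ℂ))
    (h0 : 0 ∈ Mset) (h1 : (1 : Matrix (Fin d) (Fin d) ℂ) ∈ Mset)
    (hel : ∀ M ∈ Mset, IsPOVMElem M) (hconv : Convex ℝ Mset)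
    (hcompl : ∀ M ∈ Mset, 1 - M ∈ Mset)
    (hspan : ∀ A : Matrix (Fin d) (Fin d) ℂ, A.IsHermitian → A ∈ Submodule.span ℝ Mset) :
    ∃ r > (0 : ℝ), ∀ H : Matrix (Fin d) (Fin d) ℂ, H.IsHermitian → opNorm H ≤ r →
      ((1 / 2 : ℝ) • (1 : Matrix (Fin d) (Fin d) ℂ) + H) ∈ Mset := by
  classical
  letI instN : NormedAddCommGroup (Matrix (Fin d) (Fin d) ℂ) :=
    Matrix.frobeniusNormedAddCommGroup
  letI instS : NormedSpace ℝ (Matrix (Fin d) (Fin d) ℂ) := Matrix.frobeniusNormedSpace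
  letI instT : TopologicalSpace (Matrix (Fin d) (Fin d) ℂ) :=
    instN.toSeminormedAddCommGroup.toPseudoMetricSpace.toUniformSpace.toTopologicalSpace
  haveI : FiniteDimensional ℝ (Matrix (Fin d) (Fin d) ℂ) := by infer_instance
  -- (1/2) • 1 belongs to Mset
  have hhalf : ((1/2 : ℝ)) • (1 : (Matrix (Fin d) (Fin d) ℂ)) ∈ Mset := by
    have := hconv h0 h1 (by norm_num : (0:ℝ) ≤ 1/2) (by norm_num : (0:ℝ) ≤ 1/2) (by norm_num)
    simpa using this
  have hone : (1 : (Matrix (Fin d) (Fin d) ℂ)) = (1/2 : ℝ) • (1 : (Matrix (Fin d) (Fin d) ℂ)) + (1/2 : ℝ) • (1 : (Matrix (Fin d) (Fin d) ℂ)) := by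
    rw [← add_smul]; norm_num
  -- the centered set
  set S' : Set (Matrix (Fin d) (Fin d) ℂ) := (fun M => M - (1/2 : ℝ) • 1) '' Mset with hS'
  have h0' : (0 : (Matrix (Fin d) (Fin d) ℂ)) ∈ S' := ⟨(1/2 : ℝ) • 1, hhalf, sub_self _⟩
  have hsymm' : ∀ x ∈ S', -x ∈ S' := by
    rintro x ⟨M, hM, rfl⟩
    have hone' : (1 : (Matrix (Fin d) (Fin d) ℂ)) - (1/2 : ℝ) • 1 = (1/2 : ℝ) • 1 := by
      rw [sub_eq_iff_eq_add, ← add_smul]; norm_num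
    exact ⟨1 - M, hcompl M hM, by dsimp only; rw [sub_right_comm, hone', neg_sub]⟩
  have hconv' : Convex ℝ S' := by
    have hEq : S' = (fun x => -((1/2 : ℝ) • (1 : (Matrix (Fin d) (Fin d) ℂ))) + x) '' Mset := by
      ext y; simp [hS', sub_eq_neg_add]
    rw [hEq]; exact hconv.translate _
  -- every Hermitian matrix lies in the span of S'
  have hMsub : Mset ⊆ (Submodule.span ℝ S' : Set (Matrix (Fin d) (Fin d) ℂ)) := by
    intro M hM
    have hnh : (0 : (Matrix (Fin d) (Fin d) ℂ)) - (1/2 : ℝ) • 1 ∈ S' := ⟨0, h0, rfl⟩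
    have h1' : (1/2 : ℝ) • (1 : (Matrix (Fin d) (Fin d) ℂ)) ∈ Submodule.span ℝ S' := by
      have := (Submodule.span ℝ S').neg_mem (Submodule.subset_span hnh)
      simpa using this
    have h2' : M - (1/2 : ℝ) • 1 ∈ Submodule.span ℝ S' := Submodule.subset_span ⟨M, hM, rfl⟩
    have := Submodule.add_mem _ h2' h1'
    simpa using this
  have hspan' : ∀ A : (Matrix (Fin d) (Fin d) ℂ), A.IsHermitian → A ∈ Submodule.span ℝ S' := fun A hA =>
    Submodule.span_le.mpr hMsub (hspan A hA)
  -- a finite linearly independent subset spanning the same subspace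
  obtain ⟨b, hbS, hbspan, hbli⟩ := exists_linearIndependent ℝ S'
  have hbfin : b.Finite := hbli.setFinite
  haveI := hbfin.fintype
  set W := Submodule.span ℝ (Set.range ((↑) : b → (Matrix (Fin d) (Fin d) ℂ))) with hWdef
  have hWeq : W = Submodule.span ℝ b := by rw [hWdef, Subtype.range_coe]
  let B : Module.Basis b ℝ W := Module.Basis.span hbli
  -- coordinate functionals are bounded
  have coordBound : ∀ i : b, ∃ C : ℝ, 0 ≤ C ∧ ∀ w : W, |B.repr w i| ≤ C * ‖w‖ := by
    intro i
    let f := LinearMap.toContinuousLinearMap (B.coord i)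
    refine ⟨‖f‖, norm_nonneg f, fun w => ?_⟩
    have := f.le_opNorm w
    have hfw : f w = B.repr w i := rfl
    rw [hfw, Real.norm_eq_abs] at this
    exact this
  choose C hC0 hC using coordBound
  -- the Frobenius norm is controlled by the operator norm
  have opBound : ∃ c : ℝ, 0 ≤ c ∧ ∀ A : (Matrix (Fin d) (Fin d) ℂ), ‖A‖ ≤ c * opNorm A := by
    set E := EuclideanSpace ℂ (Fin d) →L[ℂ] EuclideanSpace ℂ (Fin d) with hE
    letI : NormedSpace ℝ E := NormedSpace.complexToReal
    let e0 := Matrix.toEuclideanCLM (𝕜 := ℂ) (n := Fin d)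
    let e : (Matrix (Fin d) (Fin d) ℂ) ≃ₗ[ℝ] E :=
      { toFun := fun A => e0 A
        map_add' := fun A B => map_add e0 A B
        map_smul' := fun r A => by
          simp only [RingHom.id_apply]
          rw [RCLike.real_smul_eq_coe_smul (K := ℂ) r A,
            RCLike.real_smul_eq_coe_smul (K := ℂ) r (e0 A)]
          exact map_smul e0 _ _
        invFun := fun T => e0.symm T
        left_inv := fun A => e0.symm_apply_apply A
        right_inv := fun T => e0.apply_symm_apply T }
    haveI : FiniteDimensional ℝ E := LinearEquiv.finiteDimensional e
    let gc := LinearMap.toContinuousLinearMap (e.symm.toLinearMap)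
    refine ⟨‖gc‖, gc.opNorm_nonneg, fun A => ?_⟩
    have h1 := gc.le_opNorm (e A)
    have h2 : gc (e A) = A := by
      simp [gc]
    have h3 : ‖e A‖ = opNorm A := rfl
    rw [h2, h3] at h1
    exact h1
  obtain ⟨c, hc0, hcop⟩ := opBound
  have hCsum : (0:ℝ) ≤ ∑ i : b, C i := Finset.sum_nonneg fun i _ => hC0 i
  set K : ℝ := (∑ i : b, C i) * c + 1 with hK
  have hKpos : (0:ℝ) < K := by positivity
  refine ⟨K⁻¹, by positivity, ?_⟩
  intro H hH hHnorm
  have hHW : H ∈ W := by rw [hWeq, hbspan]; exact hspan' H hH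
  set x : W := ⟨H, hHW⟩ with hx
  -- representation of H
  have hrepr : ∑ i : b, B.repr x i • ((i : (Matrix (Fin d) (Fin d) ℂ))) = H := by
    have hsum := B.sum_repr x
    calc ∑ i : b, B.repr x i • (i : (Matrix (Fin d) (Fin d) ℂ))
        = ∑ i : b, B.repr x i • ((B i : (Matrix (Fin d) (Fin d) ℂ))) := by
          refine Finset.sum_congr rfl fun i _ => ?_
          rw [Module.Basis.span_apply]
      _ = ((∑ i : b, B.repr x i • B i : W) : (Matrix (Fin d) (Fin d) ℂ)) := by
          rw [AddSubmonoidClass.coe_finset_sum]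
          exact Finset.sum_congr rfl fun i _ => by simp
      _ = H := by rw [hsum]
  have hnx : ‖x‖ = ‖H‖ := rfl
  have hopn : (0:ℝ) ≤ opNorm H := norm_nonneg _
  have habs : ∑ i : b, |B.repr x i| ≤ 1 := by
    have hstep : ∑ i : b, |B.repr x i| ≤ (∑ i : b, C i) * ‖H‖ := by
      calc ∑ i : b, |B.repr x i| ≤ ∑ i : b, C i * ‖x‖ :=
            Finset.sum_le_sum fun i _ => hC i x
        _ = (∑ i : b, C i) * ‖H‖ := by rw [← Finset.sum_mul, hnx]
    have h2 : (∑ i : b, C i) * ‖H‖ ≤ (∑ i : b, C i) * (c * opNorm H) :=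
      mul_le_mul_of_nonneg_left (hcop H) hCsum
    have h3 : (∑ i : b, C i) * (c * opNorm H) ≤ ((∑ i : b, C i) * c) * K⁻¹ := by
      rw [← mul_assoc]
      exact mul_le_mul_of_nonneg_left hHnorm (by positivity)
    have h4 : ((∑ i : b, C i) * c) * K⁻¹ ≤ K * K⁻¹ :=
      mul_le_mul_of_nonneg_right (by rw [hK]; linarith) (by positivity)
    have h5 : K * K⁻¹ = 1 := mul_inv_cancel₀ hKpos.ne'
    linarith
  have hmem : (∑ i : b, B.repr x i • ((i : (Matrix (Fin d) (Fin d) ℂ)))) ∈ S' :=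
    comb_mem hconv' h0' hsymm' (fun i => B.repr x i) (fun i => (i : (Matrix (Fin d) (Fin d) ℂ)))
      (fun i => hbS i.2) habs
  rw [hrepr] at hmem
  obtain ⟨M, hM, hMe⟩ := hmem
  have hfin : (1/2 : ℝ) • (1 : (Matrix (Fin d) (Fin d) ℂ)) + H = M := by
    dsimp only at hMe
    rw [← hMe]; module
  rw [hfin]
  exact hM

end QSVQDH
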